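/- The element z = (σ_1 σ_2 ⋯ σ_{n-1})^n lies in the center of B_n, z belongs to the dual braid monoid B_n^{+*}, and for every α ∈ B_n there exists m ∈ ℕ such that α z^m ∈ B_n^{+*}. -/

import Mathlib

/-- The defining relations of the braid group on `n` strands, inside the free group on
generators indexed by `ℕ`.  Generator `i` corresponds to the Artin generator `σ_i`
(for `1 ≤ i ≤ n-1`); generators with index `0` or `≥ n` are killed. -/
def braidRels (n : ℕ) : Set (FreeGroup ℕ) :=
  {r | (∃ i j : ℕ, 1 ≤ i ∧ i + 2 ≤ j ∧ j ≤ n - 1 ∧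
          r = FreeGroup.of i * FreeGroup.of j * (FreeGroup.of i)⁻¹ * (FreeGroup.of j)⁻¹) ∨
       (∃ i : ℕ, 1 ≤ i ∧ i + 1 ≤ n - 1 ∧
          r = FreeGroup.of i * FreeGroup.of (i+1) * FreeGroup.of i *
              (FreeGroup.of (i+1) * FreeGroup.of i * FreeGroup.of (i+1))⁻¹) ∨
       (∃ i : ℕ, (i = 0 ∨ n ≤ i) ∧ r = FreeGroup.of i)}

/-- The braid group `B_n` on `n` strands. -/
abbrev Braid (n : ℕ) := PresentedGroup (braidRels n)

/-- The Artin generator `σ_i` of `B_n`. -/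
def genσ (n i : ℕ) : Braid n := PresentedGroup.of i

/-- The band generator `a_{i,j} = (σ_{j-1} ⋯ σ_{i+1}) σ_i (σ_{i+1}⁻¹ ⋯ σ_{j-1}⁻¹)`. -/
def band (n i j : ℕ) : Braid n :=
  (((List.range' (i+1) (j-1-i)).reverse.map (genσ n)).prod) * genσ n i *
    (((List.range' (i+1) (j-1-i)).reverse.map (genσ n)).prod)⁻¹

/-- The dual braid monoid `B_n^{+*}`: the submonoid of `B_n` generated by the band
generators `a_{i,j}`, `1 ≤ i < j ≤ n`. -/
def dualMonoid (n : ℕ) : Submonoid (Braid n) :=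
  Submonoid.closure {x | ∃ i j : ℕ, 1 ≤ i ∧ i < j ∧ j ≤ n ∧ x = band n i j}

/-- The submonoid `B_I^{+*}` generated by the band generators `a_{i,j}` with `i, j ∈ I`. -/
def dualMonoidOn (n : ℕ) (I : Set ℕ) : Submonoid (Braid n) :=
  Submonoid.closure {x | ∃ i j : ℕ, i ∈ I ∧ j ∈ I ∧ 1 ≤ i ∧ i < j ∧ j ≤ n ∧ x = band n i j}

/-- Evaluation of a word in the letters `σ_i^{±1}` (a letter is a pair of an index and a
sign, `true` meaning positive). -/
def evalWord (n : ℕ) (w : List (ℕ × Bool)) : Braid n :=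
  (w.map (fun p => if p.2 then genσ n p.1 else (genσ n p.1)⁻¹)).prod

/-- `γ` is `σ_i`-positive: it is represented by a word in the letters `σ_1^{±1}, …,
σ_{n-1}^{±1}` containing at least one `σ_i`, no `σ_i⁻¹`, and no `σ_j^{±1}` with `j < i`. -/
def SigmaPositive (n i : ℕ) (γ : Braid n) : Prop :=
  ∃ w : List (ℕ × Bool),
    (∀ p ∈ w, 1 ≤ p.1 ∧ p.1 ≤ n - 1) ∧
    (i, true) ∈ w ∧ (i, false) ∉ w ∧
    (∀ p ∈ w, i ≤ p.1) ∧
    evalWord n w = γ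

/-- The Dehornoy ordering on `B_n`: `α <_D β` iff `α⁻¹β` is `σ_i`-positive for some `i`. -/
def dehornoyLt (n : ℕ) (α β : Braid n) : Prop :=
  ∃ i : ℕ, 1 ≤ i ∧ i ≤ n - 1 ∧ SigmaPositive n i (α⁻¹ * β)

/-- The full twist `z = (σ_1 σ_2 ⋯ σ_{n-1})^n`. -/
def fullTwist (n : ℕ) : Braid n := (((List.range' 1 (n - 1)).map (genσ n)).prod) ^ n

namespace BraidAux

theorem rel_eq_one {n : ℕ} {r : FreeGroup ℕ} (h : r ∈ braidRels n) :
    PresentedGroup.mk (braidRels n) r = 1 := by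
  rw [← (PresentedGroup.mk (braidRels n)).map_one]
  exact (QuotientGroup.eq_one_iff r).2 (Subgroup.subset_normalClosure h)

theorem kill {n i : ℕ} (h : i = 0 ∨ n ≤ i) : genσ n i = 1 := by
  have : FreeGroup.of i ∈ braidRels n := Or.inr (Or.inr ⟨i, h, rfl⟩)
  exact rel_eq_one this

theorem braid_rel {n i : ℕ} (h1 : 1 ≤ i) (h2 : i + 1 ≤ n - 1) :
    genσ n i * genσ n (i+1) * genσ n i = genσ n (i+1) * genσ n i * genσ n (i+1) := by
  have hm : (FreeGroup.of i * FreeGroup.of (i+1) * FreeGroup.of i *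
      (FreeGroup.of (i+1) * FreeGroup.of i * FreeGroup.of (i+1))⁻¹ : FreeGroup ℕ) ∈ braidRels n :=
    Or.inr (Or.inl ⟨i, h1, h2, rfl⟩)
  have := rel_eq_one hm
  simp only [map_mul, map_inv] at this
  rw [mul_inv_eq_one] at this
  exact this

theorem comm_rel {n i j : ℕ} (h : i + 2 ≤ j) :
    genσ n i * genσ n j = genσ n j * genσ n i := by
  rcases Nat.eq_zero_or_pos i with hi | hi
  · subst hi; rw [kill (Or.inl rfl)]; group
  rcases le_or_gt n j with hj | hj
  · rw [kill (n := n) (i := j) (Or.inr hj)]; group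
  · have hm : (FreeGroup.of i * FreeGroup.of j * (FreeGroup.of i)⁻¹ * (FreeGroup.of j)⁻¹ :
        FreeGroup ℕ) ∈ braidRels n := Or.inl ⟨i, j, hi, h, by omega, rfl⟩
    have := rel_eq_one hm
    simp only [map_mul, map_inv] at this
    have e : genσ n i * genσ n j * (genσ n i)⁻¹ * (genσ n j)⁻¹ = 1 := this
    have h3 : genσ n i * genσ n j * (genσ n i)⁻¹ = genσ n j := mul_inv_eq_one.mp e
    calc genσ n i * genσ n j = (genσ n i * genσ n j * (genσ n i)⁻¹) * genσ n i := by group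
    _ = genσ n j * genσ n i := by rw [h3]

/-- commutation for indices with |i-j| ≥ 2, symmetric form -/
theorem comm_rel' {n i j : ℕ} (h : i + 2 ≤ j ∨ j + 2 ≤ i) :
    genσ n i * genσ n j = genσ n j * genσ n i := by
  rcases h with h | h
  · exact comm_rel h
  · exact (comm_rel h).symm

/-- ascending block σ_a σ_{a+1} ⋯ σ_{a+b-1} -/
def asc (n a b : ℕ) : Braid n := ((List.range' a b).map (genσ n)).prod

/-- descending block σ_{a+b-1} ⋯ σ_{a+1} σ_a -/
def desc (n a b : ℕ) : Braid n := (((List.range' a b).reverse).map (genσ n)).prod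

@[simp] theorem asc_zero (n a : ℕ) : asc n a 0 = 1 := rfl
@[simp] theorem desc_zero (n a : ℕ) : desc n a 0 = 1 := rfl
@[simp] theorem asc_one (n a : ℕ) : asc n a 1 = genσ n a := by simp [asc]
@[simp] theorem desc_one (n a : ℕ) : desc n a 1 = genσ n a := by simp [desc]

theorem asc_succ (n a b : ℕ) : asc n a (b+1) = genσ n a * asc n (a+1) b := by
  simp [asc, List.range'_succ]

theorem asc_append (n a b c : ℕ) : asc n a (b+c) = asc n a b * asc n (a+b) c := by
  rw [asc, asc, asc, ← List.prod_append, ← List.map_append, List.range'_append_1, Nat.add_comm b c]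

theorem asc_concat (n a b : ℕ) : asc n a (b+1) = asc n a b * genσ n (a+b) := by
  rw [show b+1 = b+1 from rfl, asc_append n a b 1, asc_one]

theorem desc_succ (n a b : ℕ) : desc n a (b+1) = desc n (a+1) b * genσ n a := by
  simp [desc, List.range'_succ]

theorem desc_append (n a b c : ℕ) : desc n a (b+c) = desc n (a+b) c * desc n a b := by
  rw [desc, desc, desc, ← List.prod_append, ← List.map_append, ← List.reverse_append,
    List.range'_append_1, Nat.add_comm b c]

theorem desc_concat (n a b : ℕ) : desc n a (b+1) = genσ n (a+b) * desc n a b := by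
  rw [desc_append n a b 1, desc_one]

/-- a single generator commutes with a product over a list of far-away indices -/
theorem comm_list {n j : ℕ} : ∀ (l : List ℕ), (∀ k ∈ l, k + 2 ≤ j ∨ j + 2 ≤ k) →
    genσ n j * (l.map (genσ n)).prod = (l.map (genσ n)).prod * genσ n j := by
  intro l
  induction l with
  | nil => simp
  | cons k t ih =>
    intro h
    simp only [List.map_cons, List.prod_cons]
    rw [← mul_assoc, (comm_rel' (h k (by simp))).symm, mul_assoc,
      ih (fun x hx => h x (by simp [hx])), ← mul_assoc]

theorem comm_asc {n j a b : ℕ} (h : a + b + 1 ≤ j ∨ j + 2 ≤ a) :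
    genσ n j * asc n a b = asc n a b * genσ n j := by
  apply comm_list
  intro k hk
  rw [List.mem_range'_1] at hk
  omega

theorem comm_desc {n j a b : ℕ} (h : a + b + 1 ≤ j ∨ j + 2 ≤ a) :
    genσ n j * desc n a b = desc n a b * genσ n j := by
  apply comm_list
  intro k hk
  rw [List.mem_reverse, List.mem_range'_1] at hk
  omega

end BraidAux

namespace BraidAux

private theorem swap {G : Type*} [Group G] (x y Z : G) (h : x * y = y * x) :
    x * (y * Z) = y * (x * Z) := by rw [← mul_assoc, h, mul_assoc]

theorem shift {n a b i : ℕ} (ha : 1 ≤ a) (hb : a + b ≤ n) (h1 : a ≤ i) (h2 : i + 2 ≤ a + b) :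
    asc n a b * genσ n i = genσ n (i+1) * asc n a b := by
  set b1 := i - a with hb1
  set b2 := a + b - i - 2 with hb2
  have e0 : b = b1 + (1 + (1 + b2)) := by omega
  have e1 : asc n a b = asc n a b1 * (genσ n i * genσ n (i+1)) * asc n (i+2) b2 := by
    rw [e0, asc_append, asc_append, asc_append, asc_one, asc_one,
      show a + b1 = i from by omega, show i + 1 + 1 = i + 2 from rfl]
    group
  have hC : asc n (i+2) b2 * genσ n i = genσ n i * asc n (i+2) b2 :=
    (comm_asc (Or.inr (le_refl (i+2)))).symm
  have hbr := braid_rel (n := n) (i := i) (by omega) (by omega)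
  have hA : genσ n (i+1) * asc n a b1 = asc n a b1 * genσ n (i+1) :=
    comm_asc (Or.inl (by omega))
  rw [e1]
  calc asc n a b1 * (genσ n i * genσ n (i+1)) * asc n (i+2) b2 * genσ n i
      = asc n a b1 * (genσ n i * genσ n (i+1)) * (asc n (i+2) b2 * genσ n i) := by group
    _ = asc n a b1 * (genσ n i * genσ n (i+1)) * (genσ n i * asc n (i+2) b2) := by rw [hC]
    _ = asc n a b1 * (genσ n i * genσ n (i+1) * genσ n i) * asc n (i+2) b2 := by group
    _ = asc n a b1 * (genσ n (i+1) * genσ n i * genσ n (i+1)) * asc n (i+2) b2 := by rw [hbr]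
    _ = asc n a b1 * genσ n (i+1) * (genσ n i * genσ n (i+1)) * asc n (i+2) b2 := by group
    _ = genσ n (i+1) * asc n a b1 * (genσ n i * genσ n (i+1)) * asc n (i+2) b2 := by rw [← hA]
    _ = genσ n (i+1) * (asc n a b1 * (genσ n i * genσ n (i+1)) * asc n (i+2) b2) := by group

theorem shiftd {n a b i : ℕ} (ha : 1 ≤ a) (hb : a + b ≤ n) (h1 : a + 1 ≤ i) (h2 : i + 1 ≤ a + b) :
    desc n a b * genσ n i = genσ n (i-1) * desc n a b := by
  obtain ⟨i', rfl⟩ : ∃ i', i = i' + 1 := ⟨i - 1, by omega⟩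
  -- i = i' + 1, with a ≤ i' ≤ a+b-2
  set c1 := i' - a with hc1
  set c2 := a + b - i' - 2 with hc2
  have e0 : b = c1 + (1 + (1 + c2)) := by omega
  have e1 : desc n a b = desc n (i'+2) c2 * (genσ n (i'+1) * genσ n i') * desc n a c1 := by
    rw [e0, desc_append, desc_append, desc_append, desc_one, desc_one,
      show a + c1 = i' from by omega, show i' + 1 + 1 = i' + 2 from rfl]
    group
  have hC : desc n a c1 * genσ n (i'+1) = genσ n (i'+1) * desc n a c1 :=
    (comm_desc (Or.inl (by omega))).symm
  have hbr := (braid_rel (n := n) (i := i') (by omega) (by omega)).symm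
  have hA : genσ n i' * desc n (i'+2) c2 = desc n (i'+2) c2 * genσ n i' :=
    comm_desc (Or.inr (le_refl (i'+2)))
  rw [e1, show i' + 1 - 1 = i' from rfl]
  calc desc n (i'+2) c2 * (genσ n (i'+1) * genσ n i') * desc n a c1 * genσ n (i'+1)
      = desc n (i'+2) c2 * (genσ n (i'+1) * genσ n i') * (desc n a c1 * genσ n (i'+1)) := by group
    _ = desc n (i'+2) c2 * (genσ n (i'+1) * genσ n i') * (genσ n (i'+1) * desc n a c1) := by rw [hC]
    _ = desc n (i'+2) c2 * (genσ n (i'+1) * genσ n i' * genσ n (i'+1)) * desc n a c1 := by group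
    _ = desc n (i'+2) c2 * (genσ n i' * genσ n (i'+1) * genσ n i') * desc n a c1 := by rw [hbr]
    _ = desc n (i'+2) c2 * genσ n i' * (genσ n (i'+1) * genσ n i') * desc n a c1 := by group
    _ = genσ n i' * desc n (i'+2) c2 * (genσ n (i'+1) * genσ n i') * desc n a c1 := by rw [← hA]
    _ = genσ n i' * (desc n (i'+2) c2 * (genσ n (i'+1) * genσ n i') * desc n a c1) := by group


/-- moving a descending block past a larger descending block shifts indices up -/
theorem Vgen {n a B : ℕ} (ha : 1 ≤ a) (hB : a + B ≤ n) :
    ∀ q c, a ≤ c → c + q ≤ a + B - 1 →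
    desc n c q * desc n a B = desc n a B * desc n (c+1) q := by
  intro q
  induction q with
  | zero => intro c _ _; simp
  | succ q ih =>
    intro c hc hq
    have h1 : desc n c (q+1) = genσ n (c+q) * desc n c q := desc_concat n c q
    have h2 : desc n (c+1) (q+1) = genσ n (c+1+q) * desc n (c+1) q := desc_concat n (c+1) q
    have h3 : desc n a B * genσ n (c+q+1) = genσ n (c+q) * desc n a B := by
      have := shiftd (n := n) (a := a) (b := B) (i := c+q+1) ha hB (by omega) (by omega)
      simpa using this
    rw [h1, h2, mul_assoc, ih c hc (by omega), ← mul_assoc, ← h3,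
      show c+1+q = c+q+1 from by omega, mul_assoc]

/-- the key factorization `(σ_a ⋯ σ_{a+p-1})^q = (σ_{a+q-1} ⋯ σ_a) · (σ_{a+1} ⋯ σ_{a+p-1})^q` -/
theorem GEN {n : ℕ} : ∀ q a p, 1 ≤ a → a + p ≤ n → q ≤ p →
    (asc n a p) ^ q = desc n a q * (asc n (a+1) (p-1)) ^ q := by
  intro q
  induction q with
  | zero => intro a p _ _ _; simp
  | succ q ih =>
    intro a p ha hp hq
    have hD : asc n a p = genσ n a * asc n (a+1) (p-1) := by
      rw [show p = (p-1)+1 from by omega] at hp ⊢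
      exact asc_succ n a (p-1)
    have hE : (asc n (a+1) (p-1)) ^ q = desc n (a+1) q * (asc n (a+2) (p-2)) ^ q := by
      have := ih (a+1) (p-1) (by omega) (by omega) (by omega)
      rwa [show a+1+1 = a+2 from rfl, show p-1-1 = p-2 from by omega] at this
    have hcomm : (asc n (a+2) (p-2)) ^ q * genσ n a = genσ n a * (asc n (a+2) (p-2)) ^ q := by
      have : Commute (genσ n a) (asc n (a+2) (p-2)) := comm_asc (Or.inr (le_refl (a+2)))
      exact (this.pow_right q).symm
    have hV : desc n a q * desc n a (q+1) = desc n a (q+1) * desc n (a+1) q := by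
      rcases Nat.eq_zero_or_pos q with h0 | h0
      · subst h0; simp
      · exact Vgen (n := n) ha (by omega : a + (q+1) ≤ n) q a (le_refl a) (by omega)
    have hd : desc n (a+1) q * genσ n a = desc n a (q+1) := (desc_succ n a q).symm
    calc (asc n a p) ^ (q+1) = (asc n a p) ^ q * asc n a p := pow_succ _ _
      _ = desc n a q * (asc n (a+1) (p-1)) ^ q * (genσ n a * asc n (a+1) (p-1)) := by
          rw [ih a p ha hp (by omega), hD]
      _ = desc n a q * (desc n (a+1) q * (asc n (a+2) (p-2)) ^ q) *
            (genσ n a * asc n (a+1) (p-1)) := by rw [hE]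
      _ = desc n a q * desc n (a+1) q * ((asc n (a+2) (p-2)) ^ q * genσ n a) *
            asc n (a+1) (p-1) := by group
      _ = desc n a q * desc n (a+1) q * (genσ n a * (asc n (a+2) (p-2)) ^ q) *
            asc n (a+1) (p-1) := by rw [hcomm]
      _ = desc n a q * (desc n (a+1) q * genσ n a) * ((asc n (a+2) (p-2)) ^ q *
            asc n (a+1) (p-1)) := by group
      _ = desc n a q * desc n a (q+1) * ((asc n (a+2) (p-2)) ^ q * asc n (a+1) (p-1)) := by
          rw [hd]
      _ = desc n a (q+1) * desc n (a+1) q * ((asc n (a+2) (p-2)) ^ q * asc n (a+1) (p-1)) := by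
          rw [hV]
      _ = desc n a (q+1) * ((desc n (a+1) q * (asc n (a+2) (p-2)) ^ q) * asc n (a+1) (p-1)) := by
          group
      _ = desc n a (q+1) * ((asc n (a+1) (p-1)) ^ q * asc n (a+1) (p-1)) := by rw [← hE]
      _ = desc n a (q+1) * (asc n (a+1) (p-1)) ^ (q+1) := by rw [← pow_succ]


/-- `z_k = (σ_k ⋯ σ_{n-1})^{n-k+1}` commutes with `σ_j` for `k ≤ j ≤ n-1`. -/
theorem Zlem {n : ℕ} : ∀ b k, k + b = n → 1 ≤ k →
    ∀ j, k ≤ j → j ≤ n - 1 →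
    (asc n k b) ^ (b+1) * genσ n j = genσ n j * (asc n k b) ^ (b+1) := by
  intro b
  induction b with
  | zero => intro k hk h1 j hj1 hj2; omega
  | succ b ih =>
    intro k hk h1 j hj1 hj2
    have hn1 : 1 ≤ n := by omega
    set D := asc n k (b+1) with hD
    set z := D ^ (b+2) with hz
    -- factorization z = τ * z'
    have hfac : z = (asc n k (b+1) * desc n k (b+1)) * (asc n (k+1) b) ^ (b+1) := by
      have hg := GEN (n := n) (b+1) k (b+1) h1 (by omega) (le_refl _)
      rw [show b + 1 - 1 = b from rfl] at hg
      rw [hz, hD, pow_succ', hg, ← mul_assoc]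
    -- first: commuting with σ_j for j ≥ k+1
    have hcase : ∀ j', k + 1 ≤ j' → j' ≤ n - 1 → z * genσ n j' = genσ n j' * z := by
      intro j' hj'1 hj'2
      have hτd : desc n k (b+1) * genσ n j' = genσ n (j'-1) * desc n k (b+1) :=
        shiftd h1 (by omega) (by omega) (by omega)
      have hτa : asc n k (b+1) * genσ n (j'-1) = genσ n j' * asc n k (b+1) := by
        have := shift (n := n) (a := k) (b := b+1) (i := j'-1) h1 (by omega) (by omega) (by omega)
        rwa [show j' - 1 + 1 = j' from by omega] at this
      have hz' : (asc n (k+1) b) ^ (b+1) * genσ n j' = genσ n j' * (asc n (k+1) b) ^ (b+1) :=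
        ih (k+1) (by omega) (by omega) j' hj'1 hj'2
      rw [hfac]
      calc asc n k (b+1) * desc n k (b+1) * (asc n (k+1) b) ^ (b+1) * genσ n j'
          = asc n k (b+1) * desc n k (b+1) * ((asc n (k+1) b) ^ (b+1) * genσ n j') := by group
        _ = asc n k (b+1) * desc n k (b+1) * (genσ n j' * (asc n (k+1) b) ^ (b+1)) := by rw [hz']
        _ = asc n k (b+1) * (desc n k (b+1) * genσ n j') * (asc n (k+1) b) ^ (b+1) := by group
        _ = asc n k (b+1) * (genσ n (j'-1) * desc n k (b+1)) * (asc n (k+1) b) ^ (b+1) := by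
            rw [hτd]
        _ = (asc n k (b+1) * genσ n (j'-1)) * desc n k (b+1) * (asc n (k+1) b) ^ (b+1) := by group
        _ = (genσ n j' * asc n k (b+1)) * desc n k (b+1) * (asc n (k+1) b) ^ (b+1) := by rw [hτa]
        _ = genσ n j' * (asc n k (b+1) * desc n k (b+1) * (asc n (k+1) b) ^ (b+1)) := by group
    rcases Nat.lt_or_ge k j with hkj | hkj
    · exact hcase j (by omega) hj2
    · -- j = k
      have hjk : j = k := le_antisymm hkj hj1
      subst hjk
      rcases Nat.lt_or_ge (j+1) n with hlt | hge
      · -- j ≤ n - 2, use conjugation trick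
        have hsh : D * genσ n j = genσ n (j+1) * D :=
          shift h1 (by omega) (le_refl j) (by omega)
        have hj1' : z * genσ n (j+1) = genσ n (j+1) * z := hcase (j+1) (by omega) (by omega)
        -- z * σ_j = z * D⁻¹ σ_{j+1} D = D⁻¹ σ_{j+1} z D = D⁻¹ σ_{j+1} D z = σ_j z
        have hgen : genσ n j = D⁻¹ * (genσ n (j+1) * D) := by
          rw [← hsh]; group
        have hDz : z * D = D * z := (Commute.pow_self D (b+2)).eq
        have hDz' : z * D⁻¹ = D⁻¹ * z := ((Commute.pow_self D (b+2)).inv_right).eq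
        rw [hgen]
        calc z * (D⁻¹ * (genσ n (j+1) * D))
            = (z * D⁻¹) * genσ n (j+1) * D := by group
          _ = (D⁻¹ * z) * genσ n (j+1) * D := by rw [hDz']
          _ = D⁻¹ * (z * genσ n (j+1)) * D := by group
          _ = D⁻¹ * (genσ n (j+1) * z) * D := by rw [hj1']
          _ = D⁻¹ * genσ n (j+1) * (z * D) := by group
          _ = D⁻¹ * genσ n (j+1) * (D * z) := by rw [hDz]
          _ = (D⁻¹ * (genσ n (j+1) * D)) * z := by group
      · -- j = k = n-1, b = 0, z = σ_j^2
        have hb0 : b = 0 := by omega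
        subst hb0
        have : D = genσ n j := by rw [hD]; simp
        rw [hz, this]
        group

end BraidAux

namespace BraidAux

theorem band_succ (n i : ℕ) : band n i (i+1) = genσ n i := by
  simp [band]

theorem gen_mem {n i : ℕ} (h1 : 1 ≤ i) (h2 : i + 1 ≤ n) : genσ n i ∈ dualMonoid n :=
  Submonoid.subset_closure ⟨i, i+1, h1, by omega, h2, (band_succ n i).symm⟩

theorem asc_mem {n : ℕ} : ∀ b a, 1 ≤ a → a + b ≤ n → asc n a b ∈ dualMonoid n := by
  intro b
  induction b with
  | zero => intro a _ _; simp only [asc_zero]; exact one_mem _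
  | succ b ih =>
    intro a h1 h2
    rw [asc_concat]
    exact mul_mem (ih a h1 (by omega)) (gen_mem (by omega) (by omega))

theorem fullTwist_eq (n : ℕ) : fullTwist n = (asc n 1 (n-1)) ^ n := rfl

theorem delta_mem {n : ℕ} (hn : 2 ≤ n) : asc n 1 (n-1) ∈ dualMonoid n :=
  asc_mem (n-1) 1 le_rfl (by omega)

theorem fullTwist_mem {n : ℕ} (hn : 2 ≤ n) : fullTwist n ∈ dualMonoid n := by
  rw [fullTwist_eq]; exact pow_mem (delta_mem hn) n

theorem fullTwist_comm {n : ℕ} (hn : 2 ≤ n) (g : Braid n) :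
    g * fullTwist n = fullTwist n * g := by
  have hgen : ∀ j : ℕ, fullTwist n * genσ n j = genσ n j * fullTwist n := by
    intro j
    rcases Nat.eq_zero_or_pos j with h0 | h0
    · subst h0; rw [kill (Or.inl rfl)]; group
    rcases Nat.lt_or_ge j n with hjn | hjn
    · have := Zlem (n := n) (n-1) 1 (by omega) le_rfl j (by omega) (by omega)
      rw [show n - 1 + 1 = n from by omega] at this
      exact this
    · rw [kill (Or.inr hjn)]; group
  have : g ∈ Subgroup.centralizer {fullTwist n} := by
    apply PresentedGroup.generated_by
    intro j
    rw [Subgroup.mem_centralizer_iff]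
    intro h hh
    rcases hh with rfl
    exact hgen j
  have := Subgroup.mem_centralizer_iff.mp this (fullTwist n) rfl
  exact this.symm

theorem fullTwist_central {n : ℕ} (hn : 2 ≤ n) :
    fullTwist n ∈ Subgroup.center (Braid n) :=
  Subgroup.mem_center_iff.mpr (fullTwist_comm hn)

theorem inv_step {n : ℕ} (hn : 2 ≤ n) : ∀ m, m + 1 ≤ n - 1 →
    (genσ n (m+1))⁻¹ * (asc n 1 (n-1)) ^ (m+1) =
      (asc n 1 (n-1)) ^ m * ((genσ n 1)⁻¹ * asc n 1 (n-1)) := by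
  intro m
  induction m with
  | zero => intro _; rw [pow_one, pow_zero, one_mul]
  | succ m ih =>
    intro h
    have hsh : asc n 1 (n-1) * genσ n (m+1) = genσ n (m+2) * asc n 1 (n-1) := by
      have := shift (n := n) (a := 1) (b := n-1) (i := m+1) le_rfl (by omega) (by omega) (by omega)
      rwa [show m+1+1 = m+2 from rfl] at this
    have hinv : (genσ n (m+2))⁻¹ * asc n 1 (n-1) = asc n 1 (n-1) * (genσ n (m+1))⁻¹ := by
      have h2 := congrArg (fun x => (genσ n (m+2))⁻¹ * x * (genσ n (m+1))⁻¹) hsh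
      simpa [mul_assoc] using h2
    calc (genσ n (m+2))⁻¹ * (asc n 1 (n-1)) ^ (m+2)
        = ((genσ n (m+2))⁻¹ * asc n 1 (n-1)) * (asc n 1 (n-1)) ^ (m+1) := by
          rw [pow_succ']; group
      _ = asc n 1 (n-1) * ((genσ n (m+1))⁻¹ * (asc n 1 (n-1)) ^ (m+1)) := by
          rw [hinv]; group
      _ = asc n 1 (n-1) * ((asc n 1 (n-1)) ^ m * ((genσ n 1)⁻¹ * asc n 1 (n-1))) := by
          rw [ih (by omega)]
      _ = (asc n 1 (n-1)) ^ (m+1) * ((genσ n 1)⁻¹ * asc n 1 (n-1)) := by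
          rw [pow_succ']; group

theorem inv_gen_one {n : ℕ} (hn : 2 ≤ n) :
    (genσ n 1)⁻¹ * asc n 1 (n-1) = asc n 2 (n-2) := by
  have : asc n 1 (n-1) = genσ n 1 * asc n 2 (n-2) := by
    rw [show n - 1 = (n-2)+1 from by omega, asc_succ]
  rw [this, inv_mul_cancel_left]

theorem inv_gen_mem {n : ℕ} (hn : 2 ≤ n) {i : ℕ} (h1 : 1 ≤ i) (h2 : i ≤ n - 1) :
    (genσ n i)⁻¹ * fullTwist n ∈ dualMonoid n := by
  obtain ⟨m, rfl⟩ : ∃ m, i = m + 1 := ⟨i - 1, by omega⟩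
  have e : (genσ n (m+1))⁻¹ * fullTwist n =
      ((genσ n (m+1))⁻¹ * (asc n 1 (n-1)) ^ (m+1)) * (asc n 1 (n-1)) ^ (n - (m+1)) := by
    rw [fullTwist_eq, mul_assoc, ← pow_add, show m + 1 + (n - (m+1)) = n from by omega]
  rw [e, inv_step hn m h2, inv_gen_one hn]
  exact mul_mem (mul_mem (pow_mem (delta_mem hn) m)
    (asc_mem (n-2) 2 (by omega) (by omega))) (pow_mem (delta_mem hn) _)

theorem main_part3 {n : ℕ} (hn : 2 ≤ n) (α : Braid n) :
    ∃ m : ℕ, α * fullTwist n ^ m ∈ dualMonoid n := by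
  have h1 : α ∈ (Subgroup.closure
      (Set.range (PresentedGroup.of : ℕ → Braid n))).toSubmonoid := by
    rw [PresentedGroup.closure_range_of (braidRels n)]
    exact Subgroup.mem_top α
  rw [Subgroup.closure_toSubmonoid] at h1
  refine Submonoid.closure_induction
    (motive := fun x _ => ∃ m : ℕ, x * fullTwist n ^ m ∈ dualMonoid n) ?_ ?_ ?_ h1
  · intro x hx
    rcases hx with hx | hx
    · obtain ⟨i, rfl⟩ := hx
      rcases Nat.eq_zero_or_pos i with h0 | h0
      · exact ⟨0, by rw [pow_zero, mul_one, show (PresentedGroup.of i : Braid n) = genσ n i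
          from rfl, h0, kill (Or.inl rfl)]; exact one_mem _⟩
      rcases Nat.lt_or_ge i n with hin | hin
      · exact ⟨0, by rw [pow_zero, mul_one]; exact gen_mem h0 (by omega)⟩
      · exact ⟨0, by rw [pow_zero, mul_one, show (PresentedGroup.of i : Braid n) = genσ n i
          from rfl, kill (Or.inr hin)]; exact one_mem _⟩
    · rw [Set.mem_inv] at hx
      obtain ⟨i, hi⟩ := hx
      have hxi : x = (genσ n i)⁻¹ := by rw [← inv_inv x, ← hi]; rfl
      rw [hxi]
      rcases Nat.eq_zero_or_pos i with h0 | h0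
      · refine ⟨0, ?_⟩
        rw [pow_zero, mul_one, h0, kill (Or.inl rfl), inv_one]
        exact one_mem _
      rcases Nat.lt_or_ge i n with hin | hin
      · exact ⟨1, by rw [pow_one]; exact inv_gen_mem hn h0 (by omega)⟩
      · refine ⟨0, ?_⟩
        rw [pow_zero, mul_one, kill (Or.inr hin), inv_one]
        exact one_mem _
  · exact ⟨0, by rw [pow_zero, mul_one]; exact one_mem _⟩
  · rintro x y hx hy ⟨a, ha⟩ ⟨b, hb⟩
    refine ⟨a + b, ?_⟩
    have hcom : y * fullTwist n ^ a = fullTwist n ^ a * y := by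
      have : Commute y (fullTwist n) := fullTwist_comm hn y
      exact (this.pow_right a).eq
    have : x * y * fullTwist n ^ (a+b) = (x * fullTwist n ^ a) * (y * fullTwist n ^ b) := by
      rw [pow_add]
      calc x * y * (fullTwist n ^ a * fullTwist n ^ b)
          = x * (y * fullTwist n ^ a) * fullTwist n ^ b := by group
        _ = x * (fullTwist n ^ a * y) * fullTwist n ^ b := by rw [hcom]
        _ = (x * fullTwist n ^ a) * (y * fullTwist n ^ b) := by group
    rw [this]
    exact mul_mem ha hb

end BraidAux


/-- Theorem: `z = (σ_1 ⋯ σ_{n-1})^n` is central, lies in `B_n^{+*}`, and for every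
`α ∈ B_n` there is `m` with `α z^m ∈ B_n^{+*}`. -/
theorem fullTwist_central_dual (n : ℕ) (hn : 2 ≤ n) :
    fullTwist n ∈ Subgroup.center (Braid n) ∧
    fullTwist n ∈ dualMonoid n ∧
    ∀ α : Braid n, ∃ m : ℕ, α * fullTwist n ^ m ∈ dualMonoid n :=
  ⟨BraidAux.fullTwist_central hn, BraidAux.fullTwist_mem hn, BraidAux.main_part3 hn⟩
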